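/- In the Dynnikov monoid DS (with relations (1)-(3),(7),(8) of the paper), setting t_i = b_{i+1} d_{i-1} d_{i+1} b_{i-1}, the twisting relations d_{i+1} b_{i-1} = b_{i-1} d_{i+1} t_i and b_{i+1} d_{i-1} = t_i d_{i-1} b_{i+1} hold for all i ∈ Z/3. -/
import Mathlib


/-- The 12-letter alphabet `{a_i, b_i, c_i, d_i : i ∈ ℤ/3}`. -/
inductive Letter : Type
  | a (i : ZMod 3)
  | b (i : ZMod 3)
  | c (i : ZMod 3)
  | d (i : ZMod 3)

/-- A single letter as an element of the free monoid. -/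
def g (x : Letter) : FreeMonoid Letter := FreeMonoid.of x

/-- The defining relations (1)-(3), (7), (8) of the Dynnikov monoid `DS`. -/
inductive rel : FreeMonoid Letter → FreeMonoid Letter → Prop
  | r1 : rel (g (.d 0) * g (.d 1) * g (.d 2)) 1
  | r2a (i : ZMod 3) : rel (g (.b i) * g (.d i)) 1
  | r2b (i : ZMod 3) : rel (g (.d i) * g (.b i)) 1
  | r3a (i : ZMod 3) : rel (g (.a i)) (g (.a (i + 1)) * g (.d (i - 1)))
  | r3b (i : ZMod 3) : rel (g (.b i)) (g (.a (i - 1)) * g (.c (i + 1)))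
  | r3c (i : ZMod 3) : rel (g (.c i)) (g (.b (i - 1)) * g (.c (i + 1)))
  | r3d (i : ZMod 3) : rel (g (.d i)) (g (.a (i + 1)) * g (.c (i - 1)))
  | r7 (i : ZMod 3) (w : FreeMonoid Letter)
      (hw : w = g (.c (i + 1)) ∨ w = g (.b i) * g (.d (i + 1)) * g (.d i)) :
      rel (g (.d i) * g (.c i) * w) (w * (g (.d i) * g (.c i)))
  | r8 (i : ZMod 3) (u v : FreeMonoid Letter)
      (hu : u = g (.a i) * g (.b i) ∨ u = g (.b (i - 1)) * g (.d i) * g (.d (i - 1)) * g (.b i))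
      (hv : v = g (.a (i + 1)) ∨ v = g (.b (i + 1)) ∨ v = g (.c (i + 1)) ∨
            v = g (.b i) * g (.d (i + 1)) * g (.d i)) :
      rel (u * v) (v * u)

/-- `t_i = b_{i+1} d_{i-1} d_{i+1} b_{i-1}`. -/
def t (i : ZMod 3) : FreeMonoid Letter :=
  g (.b (i + 1)) * g (.d (i - 1)) * g (.d (i + 1)) * g (.b (i - 1))

/-- Twisting relations (27): `d_{i+1} b_{i-1} = b_{i-1} d_{i+1} t_i` and
`b_{i+1} d_{i-1} = t_i d_{i-1} b_{i+1}` hold in `DS`. -/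
theorem twisting_27 (i : ZMod 3) :
    (conGen rel).mk' (g (.d (i + 1)) * g (.b (i - 1))) =
      (conGen rel).mk' (g (.b (i - 1)) * g (.d (i + 1)) * t i) ∧
    (conGen rel).mk' (g (.b (i + 1)) * g (.d (i - 1))) =
      (conGen rel).mk' (t i * g (.d (i - 1)) * g (.b (i + 1))) := by
  set f := (conGen rel).mk' with hf
  have hbd : ∀ j : ZMod 3, f (g (.b j)) * f (g (.d j)) = 1 := by
    intro j
    rw [← map_mul, show (1 : (conGen rel).Quotient) = f 1 from (map_one f).symm]
    exact (Con.eq _).mpr (ConGen.Rel.of _ _ (rel.r2a j))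
  have hdb : ∀ j : ZMod 3, f (g (.d j)) * f (g (.b j)) = 1 := by
    intro j
    rw [← map_mul, show (1 : (conGen rel).Quotient) = f 1 from (map_one f).symm]
    exact (Con.eq _).mpr (ConGen.Rel.of _ _ (rel.r2b j))
  have key : ∀ x y p q : (conGen rel).Quotient, p * q = 1 → x * (p * (q * y)) = x * y := by
    intro x y p q h
    rw [← mul_assoc p, h, one_mul]
  constructor
  · symm
    simp only [t, map_mul, mul_assoc]
    rw [key _ _ _ _ (hdb (i + 1)), ← mul_assoc, hbd (i - 1), one_mul]
  · symm
    simp only [t, map_mul, mul_assoc]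
    rw [key _ _ _ _ (hbd (i - 1)), hdb (i + 1), mul_one]
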